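/- For every integer g ≥ 2, the limit as k → ∞ (k ranging over integers ≥ 3) of V_k(g) / k^{8(g-1)} exists and equals 3 · (3/(64π⁶))^{g-1} · S(2(g-1)). -/

import Mathlib

open Finset Filter Topology
open Real

/-- The SL₃ Verlinde number
`V_k(g) = (3k²)^{g-1} Σ_{i,j≥1, i+j≤k-1} (8 sin(iπ/k) sin(jπ/k) sin((i+j)π/k))^{-2(g-1)}`. -/
noncomputable def VerlindeSL3 (k g : ℤ) : ℝ :=
  (3 * (k : ℝ) ^ 2) ^ (g - 1) *
    ∑ i ∈ Finset.Icc (1 : ℤ) (k - 1), ∑ j ∈ Finset.Icc (1 : ℤ) (k - 1 - i),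
      (8 * Real.sin (i * Real.pi / k) * Real.sin (j * Real.pi / k) *
        Real.sin ((i + j) * Real.pi / k)) ^ (-2 * (g - 1))

/-- The multiple zeta value `S(m) = Σ_{i,j≥1} (i·j·(i+j))^{-m}`. -/
noncomputable def mzvS (m : ℤ) : ℝ :=
  ∑' (i : ℕ) (j : ℕ),
    (((i : ℝ) + 1) * ((j : ℝ) + 1) * ((i : ℝ) + (j : ℝ) + 2)) ^ (-m)


namespace VerlindeAux

/-- main term -/
noncomputable def vterm (N : ℕ) (k i j : ℤ) : ℝ :=
  ((8 * Real.sin (i * Real.pi / k) * Real.sin (j * Real.pi / k) *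
      Real.sin ((i + j) * Real.pi / k)) ^ N)⁻¹

lemma sin_lb {θ t : ℝ} (hθ0 : 0 ≤ θ) (hθ : θ ≤ π / 2) (h1 : θ ≤ t) (h2 : t ≤ π - θ) :
    2 / π * θ ≤ Real.sin t := by
  have hπ := Real.pi_pos
  rcases le_total t (π / 2) with h | h
  · calc 2 / π * θ ≤ Real.sin θ := Real.mul_le_sin hθ0 hθ
      _ ≤ Real.sin t := Real.sin_le_sin_of_le_of_le_pi_div_two (by linarith) h h1
  · rw [← Real.sin_pi_sub]
    calc 2 / π * θ ≤ Real.sin θ := Real.mul_le_sin hθ0 hθ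
      _ ≤ Real.sin (π - t) :=
        Real.sin_le_sin_of_le_of_le_pi_div_two (by linarith) (by linarith) (by linarith)

lemma sin_int_lb {k a x : ℤ} (hk : 0 < k) (ha : 0 ≤ a) (hak : 2 * a ≤ k)
    (h1 : a ≤ x) (h2 : x ≤ k - a) :
    2 * (a : ℝ) / k ≤ Real.sin ((x : ℝ) * π / k) := by
  have hπ := Real.pi_pos
  have hk' : (0:ℝ) < k := by exact_mod_cast hk
  have ha' : (0:ℝ) ≤ a := by exact_mod_cast ha
  have hak' : 2 * (a:ℝ) ≤ k := by exact_mod_cast hak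
  have h1' : (a:ℝ) ≤ x := by exact_mod_cast h1
  have h2' : (x:ℝ) ≤ k - a := by exact_mod_cast h2
  have key : 2 / π * ((a:ℝ) * π / k) ≤ Real.sin ((x:ℝ) * π / k) := by
    apply sin_lb
    · positivity
    · rw [div_le_div_iff₀ hk' (by norm_num : (0:ℝ) < 2)]
      nlinarith
    · gcongr
    · have e : π - (a:ℝ) * π / k = ((k:ℝ) - a) * π / k := by field_simp
      rw [e]; gcongr
  calc 2 * (a:ℝ) / k = 2 / π * ((a:ℝ) * π / k) := by field_simp
    _ ≤ _ := key


lemma sin_arg_pos {k x : ℤ} (hk : 0 < k) (h1 : 1 ≤ x) (h2 : x ≤ k - 1) :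
    0 < Real.sin ((x : ℝ) * π / k) := by
  have hπ := Real.pi_pos
  have hk' : (0:ℝ) < k := by exact_mod_cast hk
  have h1' : (1:ℝ) ≤ x := by exact_mod_cast h1
  have h2' : (x:ℝ) ≤ k - 1 := by exact_mod_cast h2
  apply Real.sin_pos_of_pos_of_lt_pi
  · positivity
  · rw [div_lt_iff₀ hk']; nlinarith

lemma prod3_le {a b c x y z : ℝ} (ha : 0 ≤ a) (hb : 0 ≤ b) (hc : 0 ≤ c)
    (h1 : a ≤ x) (h2 : b ≤ y) (h3 : c ≤ z) : a * b * c ≤ x * y * z :=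
  mul_le_mul (mul_le_mul h1 h2 hb (ha.trans h1)) h3 hc
    (mul_nonneg (ha.trans h1) (hb.trans h2))

lemma inv_pow_le {a b : ℝ} (N : ℕ) (ha : 0 < a) (h : a ≤ b) : (b ^ N)⁻¹ ≤ (a ^ N)⁻¹ := by
  apply inv_anti₀ (pow_pos ha N)
  exact pow_le_pow_left₀ ha.le h N

lemma vterm_nonneg {N : ℕ} {k i j : ℤ} (hk : 0 < k) (hi : 1 ≤ i) (hj : 1 ≤ j)
    (hij : i + j ≤ k - 1) : 0 ≤ vterm N k i j := by
  have h1 := sin_arg_pos hk hi (by omega)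
  have h2 := sin_arg_pos hk hj (by omega)
  have h3 := sin_arg_pos hk (show 1 ≤ i + j by omega) (by omega)
  unfold vterm
  push_cast at h1 h2 h3 ⊢
  positivity

lemma sin_reflect {k x : ℤ} (hk : (0:ℤ) < k) :
    Real.sin (((k : ℝ) - x) * π / k) = Real.sin ((x:ℝ) * π / k) := by
  have hk' : (k:ℝ) ≠ 0 := by exact_mod_cast hk.ne'
  have e : ((k:ℝ) - x) * π / k = π - (x:ℝ) * π / k := by field_simp
  rw [e, Real.sin_pi_sub]

lemma vterm_rot1 {N : ℕ} {k : ℤ} (hk : (0:ℤ) < k) (a b : ℤ) :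
    vterm N k (k - a - b) a = vterm N k a b := by
  unfold vterm
  have e1 : ((k - a - b : ℤ) : ℝ) = (k:ℝ) - ((a + b : ℤ) : ℝ) := by push_cast; ring
  rw [e1]
  rw [show (k:ℝ) - ((a + b : ℤ) : ℝ) + ((a:ℤ):ℝ) = (k:ℝ) - ((b:ℤ):ℝ) by push_cast; ring]
  rw [sin_reflect hk, sin_reflect hk]
  congr 2
  push_cast
  ring

lemma vterm_rot2 {N : ℕ} {k : ℤ} (hk : (0:ℤ) < k) (a b : ℤ) :
    vterm N k b (k - a - b) = vterm N k a b := by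
  unfold vterm
  have e1 : ((k - a - b : ℤ) : ℝ) = (k:ℝ) - ((a + b : ℤ) : ℝ) := by push_cast; ring
  rw [e1]
  rw [show ((b:ℤ):ℝ) + ((k:ℝ) - ((a + b : ℤ) : ℝ)) = (k:ℝ) - ((a:ℤ):ℝ) by push_cast; ring]
  rw [sin_reflect hk, sin_reflect hk]
  congr 2
  push_cast
  ring


/-- limit of `k sin(aπ/k)` -/
lemma tendsto_k_sin (a : ℝ) (ha : 0 < a) :
    Tendsto (fun k : ℤ => (k:ℝ) * Real.sin (a * π / k)) atTop (𝓝 (a * π)) := by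
  have hπ := Real.pi_pos
  have hslope : Tendsto (fun x : ℝ => Real.sin x / x) (𝓝[≠] 0) (𝓝 1) := by
    have h := Real.hasDerivAt_sin 0
    rw [Real.cos_zero] at h
    have h2 := hasDerivAt_iff_tendsto_slope.mp h
    refine h2.congr fun y => ?_
    simp [slope_def_field, div_eq_div_iff]
  have hc : Tendsto (fun k : ℤ => (k:ℝ)) atTop atTop := tendsto_intCast_atTop_atTop
  have hu : Tendsto (fun k : ℤ => a * π / (k:ℝ)) atTop (𝓝 0) := by
    have := hc.inv_tendsto_atTop.const_mul (a * π)
    simpa [div_eq_mul_inv] using this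
  have hu' : Tendsto (fun k : ℤ => a * π / (k:ℝ)) atTop (𝓝[≠] 0) := by
    apply tendsto_nhdsWithin_of_tendsto_nhds_of_eventually_within _ hu
    filter_upwards [eventually_gt_atTop 0] with k hk
    have hk' : (0:ℝ) < k := by exact_mod_cast hk
    have : a * π / (k:ℝ) > 0 := by positivity
    simpa [Set.mem_compl_singleton_iff] using this.ne'
  have h1 : Tendsto (fun k : ℤ => Real.sin (a * π / k) / (a * π / k)) atTop (𝓝 1) :=
    hslope.comp hu'
  have h2 := h1.const_mul (a * π)
  rw [mul_one] at h2
  apply h2.congr'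
  filter_upwards [eventually_gt_atTop 0] with k hk
  have hk' : (0:ℝ) < k := by exact_mod_cast hk
  field_simp

/-- summability of the dominating function -/
lemma summable_bound (N : ℕ) (hN : 2 ≤ N) :
    Summable (fun p : ℕ × ℕ =>
      (((((p.1:ℝ) + 1) * ((p.2:ℝ) + 1) * ((p.1:ℝ) + (p.2:ℝ) + 2)) ^ N))⁻¹) := by
  have h0 : Summable (fun n : ℕ => ((n:ℝ) ^ 2)⁻¹) := by
    simpa [one_div] using summable_one_div_nat_pow.mpr (le_refl 2)
  have h1 : Summable (fun i : ℕ => (((i:ℝ) + 1) ^ 2)⁻¹) := by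
    have h2 := (summable_nat_add_iff (f := fun n : ℕ => ((n:ℝ) ^ 2)⁻¹) 1).mpr h0
    apply h2.congr
    intro n
    push_cast
    ring
  have hprod : Summable (fun p : ℕ × ℕ => (((p.1:ℝ) + 1) ^ 2)⁻¹ * (((p.2:ℝ) + 1) ^ 2)⁻¹) :=
    h1.mul_of_nonneg h1 (fun i => by positivity) (fun j => by positivity)
  apply hprod.of_nonneg_of_le (fun p => by positivity)
  rintro ⟨i, j⟩
  show ((((i:ℝ) + 1) * ((j:ℝ) + 1) * ((i:ℝ) + (j:ℝ) + 2)) ^ N)⁻¹ ≤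
    (((i:ℝ) + 1) ^ 2)⁻¹ * (((j:ℝ) + 1) ^ 2)⁻¹
  have ha : (1:ℝ) ≤ (i:ℝ) + 1 := by have : (0:ℝ) ≤ (i:ℝ) := Nat.cast_nonneg _; linarith
  have hb : (1:ℝ) ≤ (j:ℝ) + 1 := by have : (0:ℝ) ≤ (j:ℝ) := Nat.cast_nonneg _; linarith
  obtain ⟨a, ha'⟩ : ∃ a : ℝ, a = (i:ℝ) + 1 := ⟨_, rfl⟩
  obtain ⟨b, hb'⟩ : ∃ b : ℝ, b = (j:ℝ) + 1 := ⟨_, rfl⟩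
  rw [show (i:ℝ) + (j:ℝ) + 2 = ((i:ℝ) + 1) + ((j:ℝ) + 1) by ring, ← ha', ← hb']
  rw [← ha'] at ha
  rw [← hb'] at hb
  have hab : (1:ℝ) ≤ a * b := by
    calc (1:ℝ) = 1 * 1 := by norm_num
      _ ≤ a * b := mul_le_mul ha hb (by norm_num) (by linarith)
  have hab2 : (1:ℝ) ≤ a * b * (a + b) := by
    calc (1:ℝ) = 1 * 1 := by norm_num
      _ ≤ (a * b) * (a + b) := mul_le_mul hab (by linarith) (by norm_num) (by linarith)
  have key : a ^ 2 * b ^ 2 ≤ (a * b * (a + b)) ^ N := by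
    calc a ^ 2 * b ^ 2 = (a * b) ^ 2 := by ring
      _ ≤ (a * b * (a + b)) ^ 2 :=
          pow_le_pow_left₀ (by positivity)
            (le_mul_of_one_le_right (by positivity) (by linarith)) 2
      _ ≤ (a * b * (a + b)) ^ N := pow_le_pow_right₀ hab2 hN
  calc ((a * b * (a + b)) ^ N)⁻¹ ≤ (a ^ 2 * b ^ 2)⁻¹ :=
        inv_anti₀ (by positivity) key
    _ = (a ^ 2)⁻¹ * (b ^ 2)⁻¹ := by rw [mul_inv]


/-- the triangle as a filtered product -/
noncomputable def tri (k : ℤ) : Finset (ℤ × ℤ) :=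
  (Finset.Icc 1 (k-1) ×ˢ Finset.Icc 1 (k-1)).filter (fun p => p.1 + p.2 ≤ k - 1)

lemma sum_tri_eq (k : ℤ) (f : ℤ → ℤ → ℝ) :
    ∑ i ∈ Finset.Icc 1 (k-1), ∑ j ∈ Finset.Icc 1 (k-1-i), f i j
      = ∑ p ∈ tri k, f p.1 p.2 := by
  rw [tri, Finset.sum_filter, Finset.sum_product]
  refine Finset.sum_congr rfl fun i hi => ?_
  rw [Finset.mem_Icc] at hi
  rw [← Finset.sum_filter]
  apply Finset.sum_congr _ (fun _ _ => rfl)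
  ext j
  simp only [Finset.mem_Icc, Finset.mem_filter]
  omega

lemma corner_reindex (c : ℤ) (f : ℤ → ℤ → ℝ) :
    ∑ p ∈ Finset.Icc 1 c ×ˢ Finset.Icc 1 c, f p.1 p.2
      = ∑ p ∈ Finset.range c.toNat ×ˢ Finset.range c.toNat,
          f ((p.1 : ℤ) + 1) ((p.2 : ℤ) + 1) := by
  apply Finset.sum_nbij' (i := fun p : ℤ × ℤ => ((p.1 - 1).toNat, (p.2 - 1).toNat))
    (j := fun p : ℕ × ℕ => ((p.1 : ℤ) + 1, (p.2 : ℤ) + 1))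
  · rintro ⟨a, b⟩ h
    simp only [Finset.mem_product, Finset.mem_Icc, Finset.mem_range] at h ⊢
    omega
  · rintro ⟨a, b⟩ h
    simp only [Finset.mem_product, Finset.mem_Icc, Finset.mem_range] at h ⊢
    omega
  · rintro ⟨a, b⟩ h
    simp only [Finset.mem_product, Finset.mem_Icc] at h
    simp only [Prod.mk.injEq]
    omega
  · rintro ⟨a, b⟩ h
    simp only [Finset.mem_product, Finset.mem_range] at h
    simp only [Prod.mk.injEq]
    omega
  · rintro ⟨a, b⟩ h
    simp only [Finset.mem_product, Finset.mem_Icc] at h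
    simp only []
    congr 1 <;> omega


lemma vterm_mid_bound (N : ℕ) {k i j : ℤ} (hk : 16 ≤ k)
    (hi : 1 ≤ i) (hj : 1 ≤ j) (hij : i + j ≤ k - 1)
    (h2 : (k/4 < i ∧ k/4 < j) ∨ (k/4 < j ∧ k/4 < k - i - j) ∨
      (k/4 < k - i - j ∧ k/4 < i)) :
    vterm N k i j ≤ ((k:ℝ) / 4) ^ N := by
  have hk0 : (0:ℤ) < k := by omega
  have hk' : (0:ℝ) < k := by exact_mod_cast hk0
  have hrefl : Real.sin (((i:ℝ) + (j:ℝ)) * π / k)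
      = Real.sin (((k - i - j : ℤ):ℝ) * π / k) := by
    rw [show ((i:ℝ) + (j:ℝ)) = (k:ℝ) - ((k - i - j : ℤ):ℝ) by push_cast; ring,
      sin_reflect hk0]
  have hsmall : ∀ x : ℤ, 1 ≤ x → x ≤ k - 1 → 2/(k:ℝ) ≤ Real.sin ((x:ℝ) * π / k) := by
    intro x h1 h2
    have h := sin_int_lb (a := 1) hk0 (by norm_num) (by omega) h1 (by omega)
    simpa using h
  have hbig : ∀ x : ℤ, k/4 + 1 ≤ x → x ≤ k - (k/4 + 1) →
      (1:ℝ)/2 ≤ Real.sin ((x:ℝ) * π / k) := by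
    intro x h1 h2
    have hb := sin_int_lb (a := k/4 + 1) hk0 (by omega) (by omega) h1 h2
    have hcast : (k:ℝ) ≤ 4 * ((k/4 + 1 : ℤ):ℝ) := by
      have : (k:ℤ) ≤ 4 * (k/4 + 1) := by omega
      exact_mod_cast this
    have : (1:ℝ)/2 ≤ 2 * ((k/4 + 1 : ℤ):ℝ) / k := by
      rw [div_le_div_iff₀ (by norm_num) hk']
      nlinarith
    linarith
  set s1 := Real.sin ((i:ℝ) * π / k) with hs1
  set s2 := Real.sin ((j:ℝ) * π / k) with hs2
  set s3 := Real.sin (((i:ℝ) + (j:ℝ)) * π / k) with hs3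
  have hp1 : 0 < s1 := sin_arg_pos hk0 hi (by omega)
  have hp2 : 0 < s2 := sin_arg_pos hk0 hj (by omega)
  have key : 4/(k:ℝ) ≤ 8 * s1 * s2 * s3 := by
    have hsum : Real.sin (((i + j : ℤ):ℝ) * π / k) = s3 := by push_cast; rfl
    rcases h2 with ⟨ha, hb⟩ | ⟨ha, hb⟩ | ⟨ha, hb⟩
    · have b1 : (1:ℝ)/2 ≤ s1 := hbig i (by omega) (by omega)
      have b2 : (1:ℝ)/2 ≤ s2 := hbig j (by omega) (by omega)
      have b3 : 2/(k:ℝ) ≤ s3 := by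
        have := hsmall (i+j) (by omega) (by omega); rwa [hsum] at this
      have h := prod3_le (by norm_num : (0:ℝ) ≤ 1/2) (by norm_num : (0:ℝ) ≤ 1/2)
        (by positivity : (0:ℝ) ≤ 2/(k:ℝ)) b1 b2 b3
      calc 4/(k:ℝ) = 8 * (1/2 * (1/2) * (2/(k:ℝ))) := by ring
        _ ≤ 8 * (s1 * s2 * s3) := by linarith
        _ = 8 * s1 * s2 * s3 := by ring
    · have b3 : (1:ℝ)/2 ≤ s3 := by
        have := hbig (k - i - j) (by omega) (by omega); rwa [← hrefl] at this
      have b2 : (1:ℝ)/2 ≤ s2 := hbig j (by omega) (by omega)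
      have b1 : 2/(k:ℝ) ≤ s1 := hsmall i hi (by omega)
      have h := prod3_le (by positivity : (0:ℝ) ≤ 2/(k:ℝ)) (by norm_num : (0:ℝ) ≤ 1/2)
        (by norm_num : (0:ℝ) ≤ 1/2) b1 b2 b3
      calc 4/(k:ℝ) = 8 * (2/(k:ℝ) * (1/2) * (1/2)) := by ring
        _ ≤ 8 * (s1 * s2 * s3) := by linarith
        _ = 8 * s1 * s2 * s3 := by ring
    · have b3 : (1:ℝ)/2 ≤ s3 := by
        have := hbig (k - i - j) (by omega) (by omega); rwa [← hrefl] at this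
      have b1 : (1:ℝ)/2 ≤ s1 := hbig i (by omega) (by omega)
      have b2 : 2/(k:ℝ) ≤ s2 := hsmall j hj (by omega)
      have h := prod3_le (by norm_num : (0:ℝ) ≤ 1/2) (by positivity : (0:ℝ) ≤ 2/(k:ℝ))
        (by norm_num : (0:ℝ) ≤ 1/2) b1 b2 b3
      calc 4/(k:ℝ) = 8 * (1/2 * (2/(k:ℝ)) * (1/2)) := by ring
        _ ≤ 8 * (s1 * s2 * s3) := by linarith
        _ = 8 * s1 * s2 * s3 := by ring
  calc vterm N k i j ≤ ((4/(k:ℝ)) ^ N)⁻¹ := inv_pow_le N (by positivity) key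
    _ = ((k:ℝ)/4) ^ N := by rw [← inv_pow, inv_div]


lemma middle_estimate (N : ℕ) {k : ℤ} (hk : 16 ≤ k) :
    |(∑ p ∈ tri k, vterm N k p.1 p.2)
        - 3 * ∑ p ∈ Finset.Icc 1 (k/4) ×ˢ Finset.Icc 1 (k/4), vterm N k p.1 p.2|
      ≤ (k:ℝ) ^ 2 * ((k:ℝ) / 4) ^ N := by
  have hk0 : (0:ℤ) < k := by omega
  set c := k / 4 with hcdef
  have htri : ∀ p : ℤ × ℤ, p ∈ tri k ↔ 1 ≤ p.1 ∧ 1 ≤ p.2 ∧ p.1 + p.2 ≤ k - 1 := by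
    intro p
    simp only [tri, Finset.mem_filter, Finset.mem_product, Finset.mem_Icc]
    omega
  set C1 : Finset (ℤ × ℤ) := Finset.Icc 1 c ×ˢ Finset.Icc 1 c with hC1def
  have hmC1 : ∀ p : ℤ × ℤ, p ∈ C1 ↔ 1 ≤ p.1 ∧ p.1 ≤ c ∧ 1 ≤ p.2 ∧ p.2 ≤ c := by
    intro p
    simp only [hC1def, Finset.mem_product, Finset.mem_Icc]
    omega
  set C2 : Finset (ℤ × ℤ) := (tri k).filter (fun p => p.2 ≤ c ∧ k - p.1 - p.2 ≤ c) with hC2def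
  set C3 : Finset (ℤ × ℤ) := (tri k).filter (fun p => p.1 ≤ c ∧ k - p.1 - p.2 ≤ c) with hC3def
  have hmC2 : ∀ p : ℤ × ℤ, p ∈ C2 ↔
      1 ≤ p.1 ∧ 1 ≤ p.2 ∧ p.1 + p.2 ≤ k - 1 ∧ p.2 ≤ c ∧ k - p.1 - p.2 ≤ c := by
    intro p
    simp only [hC2def, Finset.mem_filter, htri p]
    tauto
  have hmC3 : ∀ p : ℤ × ℤ, p ∈ C3 ↔
      1 ≤ p.1 ∧ 1 ≤ p.2 ∧ p.1 + p.2 ≤ k - 1 ∧ p.1 ≤ c ∧ k - p.1 - p.2 ≤ c := by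
    intro p
    simp only [hC3def, Finset.mem_filter, htri p]
    tauto
  have hC1sub : C1 ⊆ tri k := by
    intro p hp
    rw [hmC1] at hp
    rw [htri]
    omega
  have hsub : C1 ∪ C2 ∪ C3 ⊆ tri k := by
    intro p hp
    rcases Finset.mem_union.mp hp with hp | hp
    · rcases Finset.mem_union.mp hp with hp | hp
      · exact hC1sub hp
      · exact Finset.filter_subset _ _ hp
    · exact Finset.filter_subset _ _ hp
  have hd12 : Disjoint C1 C2 := by
    rw [Finset.disjoint_left]
    intro p h1 h2
    rw [hmC1] at h1
    rw [hmC2] at h2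
    omega
  have hd13 : Disjoint C1 C3 := by
    rw [Finset.disjoint_left]
    intro p h1 h2
    rw [hmC1] at h1
    rw [hmC3] at h2
    omega
  have hd23 : Disjoint C2 C3 := by
    rw [Finset.disjoint_left]
    intro p h1 h2
    rw [hmC2] at h1
    rw [hmC3] at h2
    omega
  have hsum2 : ∑ p ∈ C2, vterm N k p.1 p.2 = ∑ p ∈ C1, vterm N k p.1 p.2 := by
    apply Finset.sum_nbij' (i := fun p : ℤ × ℤ => (p.2, k - p.1 - p.2))
      (j := fun p : ℤ × ℤ => (k - p.1 - p.2, p.1))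
    · intro p hp
      rw [hmC2] at hp
      rw [hmC1]
      dsimp only
      omega
    · intro p hp
      rw [hmC1] at hp
      rw [hmC2]
      dsimp only
      omega
    · intro p _
      rw [Prod.ext_iff]
      dsimp only
      omega
    · intro p _
      rw [Prod.ext_iff]
      dsimp only
      omega
    · intro p hp
      dsimp only
      exact (vterm_rot2 hk0 p.1 p.2).symm
  have hsum3 : ∑ p ∈ C3, vterm N k p.1 p.2 = ∑ p ∈ C1, vterm N k p.1 p.2 := by
    apply Finset.sum_nbij' (i := fun p : ℤ × ℤ => (k - p.1 - p.2, p.1))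
      (j := fun p : ℤ × ℤ => (p.2, k - p.1 - p.2))
    · intro p hp
      rw [hmC3] at hp
      rw [hmC1]
      dsimp only
      omega
    · intro p hp
      rw [hmC1] at hp
      rw [hmC3]
      dsimp only
      omega
    · intro p _
      rw [Prod.ext_iff]
      dsimp only
      omega
    · intro p _
      rw [Prod.ext_iff]
      dsimp only
      omega
    · intro p hp
      dsimp only
      exact (vterm_rot1 hk0 p.1 p.2).symm
  have hsplit : ∑ p ∈ tri k, vterm N k p.1 p.2
      = 3 * (∑ p ∈ C1, vterm N k p.1 p.2)
        + ∑ p ∈ tri k \ (C1 ∪ C2 ∪ C3), vterm N k p.1 p.2 := by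
    rw [← Finset.sum_sdiff hsub]
    rw [Finset.sum_union (by
      rw [Finset.disjoint_union_left]
      exact ⟨hd13, hd23⟩)]
    rw [Finset.sum_union hd12, hsum2, hsum3]
    ring
  rw [hsplit]
  rw [add_sub_cancel_left]
  calc |∑ p ∈ tri k \ (C1 ∪ C2 ∪ C3), vterm N k p.1 p.2|
      ≤ ∑ p ∈ tri k \ (C1 ∪ C2 ∪ C3), |vterm N k p.1 p.2| := Finset.abs_sum_le_sum_abs _ _
    _ ≤ ∑ _p ∈ tri k \ (C1 ∪ C2 ∪ C3), ((k:ℝ)/4) ^ N := by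
        apply Finset.sum_le_sum
        intro p hp
        rw [Finset.mem_sdiff] at hp
        obtain ⟨hpt, hpn⟩ := hp
        rw [htri] at hpt
        simp only [Finset.mem_union, hmC1 p, hmC2 p, hmC3 p, not_or] at hpn
        rw [abs_of_nonneg (vterm_nonneg hk0 hpt.1 hpt.2.1 hpt.2.2)]
        apply vterm_mid_bound N hk hpt.1 hpt.2.1 hpt.2.2
        omega
    _ = (tri k \ (C1 ∪ C2 ∪ C3)).card * ((k:ℝ)/4) ^ N := by
        rw [Finset.sum_const, nsmul_eq_mul]
    _ ≤ (k:ℝ) ^ 2 * ((k:ℝ)/4) ^ N := by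
        apply mul_le_mul_of_nonneg_right _ (by positivity)
        have hcard : (tri k \ (C1 ∪ C2 ∪ C3)).card ≤ ((k-1).toNat) * ((k-1).toNat) := by
          calc (tri k \ (C1 ∪ C2 ∪ C3)).card ≤ (tri k).card :=
                Finset.card_le_card (Finset.sdiff_subset)
            _ ≤ (Finset.Icc (1:ℤ) (k-1) ×ˢ Finset.Icc (1:ℤ) (k-1)).card :=
                Finset.card_le_card (Finset.filter_subset _ _)
            _ = ((k-1).toNat) * ((k-1).toNat) := by
                rw [Finset.card_product, Int.card_Icc]
                congr 1 <;> omega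
        calc ((tri k \ (C1 ∪ C2 ∪ C3)).card : ℝ) ≤ (((k-1).toNat) * ((k-1).toNat) : ℕ) := by
              exact_mod_cast hcard
          _ ≤ (k:ℝ) ^ 2 := by
              have h1 : (((k-1).toNat : ℤ) : ℝ) = ((k:ℝ) - 1) := by
                rw [Int.toNat_of_nonneg (by omega)]
                push_cast
                ring
              push_cast
              rw [show (((k-1).toNat : ℝ)) = ((k:ℝ) - 1) by exact_mod_cast h1]
              have hk1 : (1:ℝ) ≤ (k:ℝ) := by exact_mod_cast hk0
              nlinarith [hk1]
  

lemma k_sin_ge {k x : ℤ} (hk0 : 0 < k) (hx : 0 ≤ x) (h2 : 2 * x ≤ k) :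
    (x:ℝ) ≤ (k:ℝ) * Real.sin ((x:ℝ) * π / k) := by
  have h := sin_int_lb hk0 hx h2 (le_refl x) (by omega)
  have hk' : (0:ℝ) < k := by exact_mod_cast hk0
  have hx' : (0:ℝ) ≤ x := by exact_mod_cast hx
  have h3 : (k:ℝ) * (2 * (x:ℝ) / k) ≤ (k:ℝ) * Real.sin ((x:ℝ) * π / k) :=
    mul_le_mul_of_nonneg_left h hk'.le
  have h4 : (k:ℝ) * (2 * (x:ℝ) / k) = 2 * x := by field_simp
  linarith

/-- the normalized corner sum, extended by zero to all of ℕ × ℕ -/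
noncomputable def cornerF (N : ℕ) (k : ℤ) (p : ℕ × ℕ) : ℝ :=
  if (p.1 : ℤ) + 1 ≤ k/4 ∧ (p.2 : ℤ) + 1 ≤ k/4 then
    ((k:ℝ) ^ (3*N))⁻¹ * vterm N k ((p.1:ℤ)+1) ((p.2:ℤ)+1) else 0

lemma cornerF_tsum (N : ℕ) {k : ℤ} (hk : 16 ≤ k) :
    ∑' p : ℕ × ℕ, cornerF N k p
      = ((k:ℝ) ^ (3*N))⁻¹
          * ∑ p ∈ Finset.Icc 1 (k/4) ×ˢ Finset.Icc 1 (k/4), vterm N k p.1 p.2 := by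
  have htn : ((k/4).toNat : ℤ) = k/4 := Int.toNat_of_nonneg (by omega)
  rw [corner_reindex, Finset.mul_sum]
  rw [tsum_eq_sum (s := Finset.range (k/4).toNat ×ˢ Finset.range (k/4).toNat) ?_]
  · apply Finset.sum_congr rfl
    intro p hp
    simp only [Finset.mem_product, Finset.mem_range] at hp
    rw [cornerF, if_pos (by omega)]
  · intro p hp
    simp only [Finset.mem_product, Finset.mem_range, not_and_or, not_lt] at hp
    rw [cornerF, if_neg (by omega)]

lemma cornerF_tendsto (N : ℕ) (p : ℕ × ℕ) :
    Tendsto (fun k : ℤ => cornerF N k p) atTop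
      (𝓝 ((8 * (((p.1:ℝ)+1) * π) * (((p.2:ℝ)+1) * π)
          * (((p.1:ℝ) + 1 + ((p.2:ℝ) + 1)) * π)) ^ N)⁻¹) := by
  have hπ := Real.pi_pos
  have ha : (0:ℝ) < (p.1:ℝ) + 1 := by positivity
  have hb : (0:ℝ) < (p.2:ℝ) + 1 := by positivity
  have hab : (0:ℝ) < (p.1:ℝ) + 1 + ((p.2:ℝ) + 1) := by positivity
  have h1 := tendsto_k_sin _ ha
  have h2 := tendsto_k_sin _ hb
  have h3 := tendsto_k_sin _ hab
  have hbase := ((((tendsto_const_nhds (x := (8:ℝ))).mul h1).mul h2).mul h3).pow N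
  have hlim : Tendsto (fun k : ℤ =>
      ((8 * ((k:ℝ) * Real.sin (((p.1:ℝ)+1) * π / k))
        * ((k:ℝ) * Real.sin (((p.2:ℝ)+1) * π / k))
        * ((k:ℝ) * Real.sin ((((p.1:ℝ) + 1 + ((p.2:ℝ) + 1))) * π / k))) ^ N)⁻¹) atTop
      (𝓝 ((8 * (((p.1:ℝ)+1) * π) * (((p.2:ℝ)+1) * π)
          * (((p.1:ℝ) + 1 + ((p.2:ℝ) + 1)) * π)) ^ N)⁻¹) := by
    apply hbase.inv₀
    positivity
  apply hlim.congr'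
  filter_upwards [eventually_ge_atTop (4*((p.1:ℤ)+1) + 4*((p.2:ℤ)+1))] with k hk
  have hk0 : (0:ℤ) < k := by omega
  have hkne : (k:ℝ) ≠ 0 := by exact_mod_cast hk0.ne'
  rw [cornerF, if_pos (by omega), vterm, pow_mul, ← mul_inv, ← mul_pow]
  congr 2
  push_cast
  ring

lemma corner_tendsto (N : ℕ) (hN : 2 ≤ N) :
    Tendsto (fun k : ℤ => ∑' p : ℕ × ℕ, cornerF N k p) atTop
      (𝓝 (∑' p : ℕ × ℕ, ((8 * (((p.1:ℝ)+1) * π) * (((p.2:ℝ)+1) * π)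
          * (((p.1:ℝ) + 1 + ((p.2:ℝ) + 1)) * π)) ^ N)⁻¹)) := by
  apply tendsto_tsum_of_dominated_convergence (summable_bound N hN) (cornerF_tendsto N)
  filter_upwards [eventually_ge_atTop 16] with k hk
  intro p
  have hk0 : (0:ℤ) < k := by omega
  have hk' : (0:ℝ) < k := by exact_mod_cast hk0
  rw [cornerF]
  split_ifs with hcond
  · have hi1 : (1:ℤ) ≤ (p.1:ℤ) + 1 := by omega
    have hj1 : (1:ℤ) ≤ (p.2:ℤ) + 1 := by omega
    have hij : ((p.1:ℤ)+1) + ((p.2:ℤ)+1) ≤ k - 1 := by omega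
    have hvn : 0 ≤ vterm N k ((p.1:ℤ)+1) ((p.2:ℤ)+1) := vterm_nonneg hk0 hi1 hj1 hij
    rw [Real.norm_eq_abs, abs_of_nonneg (by positivity)]
    rw [vterm, pow_mul, ← mul_inv, ← mul_pow]
    apply inv_pow_le N (by positivity)
    -- abc ≤ k^3 * base
    have b1 := k_sin_ge hk0 (by omega : (0:ℤ) ≤ (p.1:ℤ)+1) (by omega)
    have b2 := k_sin_ge hk0 (by omega : (0:ℤ) ≤ (p.2:ℤ)+1) (by omega)
    have b3 := k_sin_ge hk0 (by omega : (0:ℤ) ≤ (p.1:ℤ)+1+((p.2:ℤ)+1)) (by omega)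
    push_cast at b1 b2 b3 ⊢
    rw [show (p.1:ℝ) + (p.2:ℝ) + 2 = (p.1:ℝ) + 1 + ((p.2:ℝ) + 1) by ring]
    have hq := prod3_le (by positivity : (0:ℝ) ≤ (p.1:ℝ)+1) (by positivity : (0:ℝ) ≤ (p.2:ℝ)+1)
      (by positivity : (0:ℝ) ≤ (p.1:ℝ)+1+((p.2:ℝ)+1)) b1 b2 b3
    have hP : (0:ℝ) ≤ ((k:ℝ) * Real.sin (((p.1:ℝ)+1) * π / k))
        * ((k:ℝ) * Real.sin (((p.2:ℝ)+1) * π / k))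
        * ((k:ℝ) * Real.sin ((((p.1:ℝ)+1+((p.2:ℝ)+1))) * π / k)) := by
      have h0 : (0:ℝ) < ((p.1:ℝ)+1) * ((p.2:ℝ)+1) * ((p.1:ℝ)+1+((p.2:ℝ)+1)) := by positivity
      linarith
    nlinarith [hq, hP]
  · simp only [norm_zero]
    positivity


lemma norm_mid_le {x : ℝ} (hx : (1:ℝ) ≤ x) (N : ℕ) (hN : 2 ≤ N) :
    (x ^ (3*N))⁻¹ * (x^2 * (x/4) ^ N) ≤ ((4:ℝ)^N)⁻¹ * (x^2)⁻¹ := by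
  have hx0 : (0:ℝ) < x := by linarith
  have key : x ^ (2 + N) * x ^ 2 ≤ x ^ (3*N) := by
    rw [← pow_add]
    exact pow_le_pow_right₀ hx (by omega)
  have h1 : (x ^ (3*N))⁻¹ * (x^2 * (x/4) ^ N) = (x ^ (2+N) / x ^ (3*N)) * ((4:ℝ)^N)⁻¹ := by
    rw [div_pow, pow_add]
    field_simp
  rw [h1]
  have h2 : x ^ (2+N) / x ^ (3*N) ≤ (x^2)⁻¹ := by
    rw [div_le_iff₀ (by positivity), inv_mul_eq_div, le_div_iff₀ (by positivity)]
    exact key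
  calc x ^ (2+N) / x ^ (3*N) * ((4:ℝ)^N)⁻¹ ≤ (x^2)⁻¹ * ((4:ℝ)^N)⁻¹ :=
        mul_le_mul_of_nonneg_right h2 (by positivity)
    _ = ((4:ℝ)^N)⁻¹ * (x^2)⁻¹ := by ring

end VerlindeAux


open VerlindeAux

theorem verlindeSL3_asymptotics (g : ℤ) (hg : 2 ≤ g) :
    Tendsto (fun k : ℤ => VerlindeSL3 k g / (k : ℝ) ^ (8 * (g - 1))) atTop
      (𝓝 (3 * (3 / (64 * Real.pi ^ 6)) ^ (g - 1) * mzvS (2 * (g - 1)))) := by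
  have hπ := Real.pi_pos
  obtain ⟨M, hM⟩ : ∃ M : ℕ, (M:ℤ) = g - 1 := ⟨(g-1).toNat, Int.toNat_of_nonneg (by omega)⟩
  have hM1 : 1 ≤ M := by omega
  set N : ℕ := 2 * M with hNdef
  have hN2 : 2 ≤ N := by omega
  set TS : ℤ → ℝ := fun k => ∑ p ∈ tri k, vterm N k p.1 p.2 with hTSdef
  set CS : ℤ → ℝ := fun k =>
    ∑ p ∈ Finset.Icc 1 (k/4) ×ˢ Finset.Icc 1 (k/4), vterm N k p.1 p.2 with hCSdef
  set nrm : ℤ → ℝ := fun k => ((k:ℝ) ^ (3*N))⁻¹ with hnrmdef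
  -- middle part tends to zero
  have hmid : Tendsto (fun k : ℤ => nrm k * (TS k - 3 * CS k)) atTop (𝓝 0) := by
    apply squeeze_zero_norm'
      (a := fun k : ℤ => ((4:ℝ)^N)⁻¹ * (((k:ℝ)^2)⁻¹))
    · filter_upwards [eventually_ge_atTop 16] with k hk
      have hk1 : (1:ℝ) ≤ (k:ℝ) := by exact_mod_cast (by omega : (1:ℤ) ≤ k)
      have hme := middle_estimate N (k := k) hk
      rw [Real.norm_eq_abs, abs_mul, abs_of_nonneg (by positivity : (0:ℝ) ≤ nrm k)]
      calc nrm k * |TS k - 3 * CS k| ≤ nrm k * ((k:ℝ)^2 * ((k:ℝ)/4) ^ N) :=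
            mul_le_mul_of_nonneg_left hme (by positivity)
        _ ≤ ((4:ℝ)^N)⁻¹ * (((k:ℝ)^2)⁻¹) := norm_mid_le hk1 N hN2
    · have h1 : Tendsto (fun k : ℤ => (k:ℝ)^2) atTop atTop :=
        (tendsto_pow_atTop (two_ne_zero)).comp tendsto_intCast_atTop_atTop
      have h2 := h1.inv_tendsto_atTop.const_mul (((4:ℝ)^N)⁻¹)
      simpa using h2
  -- corner part
  have hcorner' : Tendsto (fun k : ℤ => nrm k * CS k) atTop
      (𝓝 (∑' p : ℕ × ℕ, ((8 * (((p.1:ℝ)+1) * π) * (((p.2:ℝ)+1) * π)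
          * (((p.1:ℝ) + 1 + ((p.2:ℝ) + 1)) * π)) ^ N)⁻¹)) := by
    apply (corner_tendsto N hN2).congr'
    filter_upwards [eventually_ge_atTop 16] with k hk
    exact cornerF_tsum N hk
  set L0 : ℝ := ∑' p : ℕ × ℕ, ((8 * (((p.1:ℝ)+1) * π) * (((p.2:ℝ)+1) * π)
          * (((p.1:ℝ) + 1 + ((p.2:ℝ) + 1)) * π)) ^ N)⁻¹ with hL0def
  have hTSlim : Tendsto (fun k : ℤ => nrm k * TS k) atTop (𝓝 (3 * L0 + 0)) := by
    apply ((hcorner'.const_mul 3).add hmid).congr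
    intro k
    ring
  rw [add_zero] at hTSlim
  have hfinal := hTSlim.const_mul ((3:ℝ)^M)
  -- identify the limit value
  have hW : mzvS (2 * (g - 1)) = ∑' p : ℕ × ℕ,
      (((((p.1:ℝ) + 1) * ((p.2:ℝ) + 1) * ((p.1:ℝ) + (p.2:ℝ) + 2)) ^ N))⁻¹ := by
    rw [mzvS]
    rw [Summable.tsum_prod' (summable_bound N hN2) (fun b => (summable_bound N hN2).prod_factor b)]
    apply tsum_congr; intro i; apply tsum_congr; intro j
    rw [show (-(2 * (g - 1)) : ℤ) = -((N:ℕ):ℤ) by rw [hNdef]; push_cast [hM]; ring]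
    rw [zpow_neg, zpow_natCast]
  have hC : (0:ℝ) < (64 * π^6) ^ M := by positivity
  have hL0 : L0 = ((64 * π^6) ^ M)⁻¹ * ∑' p : ℕ × ℕ,
      (((((p.1:ℝ) + 1) * ((p.2:ℝ) + 1) * ((p.1:ℝ) + (p.2:ℝ) + 2)) ^ N))⁻¹ := by
    rw [hL0def, ← tsum_mul_left]
    apply tsum_congr
    intro p
    rw [show N = 2 * M from rfl]
    rw [pow_mul, pow_mul]
    rw [show (8 * (((p.1:ℝ)+1) * π) * (((p.2:ℝ)+1) * π)
          * (((p.1:ℝ) + 1 + ((p.2:ℝ) + 1)) * π)) ^ 2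
        = (64 * π^6) * ((((p.1:ℝ) + 1) * ((p.2:ℝ) + 1) * ((p.1:ℝ) + (p.2:ℝ) + 2)) ^ 2) by ring]
    rw [mul_pow, mul_inv]
  have hval : (3:ℝ)^M * (3 * L0)
      = 3 * (3 / (64 * π ^ 6)) ^ (g - 1) * mzvS (2 * (g - 1)) := by
    rw [hW, hL0, ← hM, zpow_natCast, div_pow]
    field_simp
  rw [← hval]
  -- identify the function, eventually
  apply hfinal.congr'
  filter_upwards [eventually_ge_atTop 16] with k hk
  have hk0 : (0:ℤ) < k := by omega
  have hkne : (k:ℝ) ≠ 0 := by exact_mod_cast hk0.ne'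
  have hsum : VerlindeSL3 k g = (3 * (k:ℝ)^2) ^ (g-1) * TS k := by
    have e : (∑ i ∈ Finset.Icc (1:ℤ) (k-1), ∑ j ∈ Finset.Icc (1:ℤ) (k-1-i),
        (8 * Real.sin ((i:ℝ) * π / k) * Real.sin ((j:ℝ) * π / k)
          * Real.sin (((i:ℝ) + (j:ℝ)) * π / k)) ^ (-2 * (g-1)))
        = TS k := by
      rw [show TS k = ∑ p ∈ tri k, vterm N k p.1 p.2 from rfl]
      rw [← sum_tri_eq k (fun i j => vterm N k i j)]
      apply Finset.sum_congr rfl; intro i _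
      apply Finset.sum_congr rfl; intro j _
      rw [show (-2 * (g - 1) : ℤ) = -((N:ℕ):ℤ) by rw [hNdef]; push_cast [hM]; ring]
      rw [zpow_neg, zpow_natCast]
      rfl
    rw [VerlindeSL3, e]
  rw [hsum]
  rw [show (8 * ((g:ℤ) - 1)) = ((8*M:ℕ):ℤ) by push_cast [hM]; ring, zpow_natCast]
  rw [show ((g : ℤ) - 1) = ((M:ℕ):ℤ) from hM.symm, zpow_natCast]
  show (3:ℝ)^M * (((k:ℝ) ^ (3*N))⁻¹ * TS k) = _
  rw [show 3 * N = 6 * M from by rw [hNdef]; ring]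
  rw [mul_pow]
  rw [show (8:ℕ) * M = 2 * M + 6 * M by ring, pow_add, pow_mul, pow_mul]
  have h2 : ((k:ℝ)^2) ^ M ≠ 0 := by positivity
  have h6 : ((k:ℝ)^6) ^ M ≠ 0 := by positivity
  field_simp
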